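/- Let B = Σ⁻¹ - Σ⁻¹ 1_k 1_k' Σ⁻¹ / (1_k' Σ⁻¹ 1_k), where Σ is a k×k symmetric positive definite real matrix. Then B is positive semidefinite, and B x = 0 if and only if x is a scalar multiple of 1_k. -/

import Mathlib

open Matrix

lemma vecMulVec_mulVec' {k : ℕ} (u v x : Fin k → ℝ) :
    (vecMulVec u v) *ᵥ x = (v ⬝ᵥ x) • u := by
  ext i
  simp only [mulVec, vecMulVec_apply, dotProduct, Pi.smul_apply, smul_eq_mul, Finset.sum_mul]
  exact Finset.sum_congr rfl fun j _ => by ring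

lemma herm_dot {k : ℕ} (A : Matrix (Fin k) (Fin k) ℝ) (hA : A.IsHermitian) (x y : Fin k → ℝ) :
    x ⬝ᵥ (A *ᵥ y) = (A *ᵥ x) ⬝ᵥ y := by
  have hT : Aᵀ = A := by
    have := hA.eq
    rw [conjTranspose] at this
    ext i j
    have := congrFun (congrFun this i) j
    simpa using this
  rw [dotProduct_mulVec, ← hT, vecMul_transpose, hT]

theorem centered_inverse_psd_and_kernel
    (k : ℕ) (hk : 0 < k) (S : Matrix (Fin k) (Fin k) ℝ) (hS : S.PosDef) :
    let u : Fin k → ℝ := S⁻¹.mulVec (fun _ => 1)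
    let B : Matrix (Fin k) (Fin k) ℝ :=
      S⁻¹ - ((fun _ => (1 : ℝ)) ⬝ᵥ S⁻¹.mulVec (fun _ => 1))⁻¹ • vecMulVec u u
    B.PosSemidef ∧ ∀ x : Fin k → ℝ, B.mulVec x = 0 ↔ ∃ c : ℝ, x = c • (fun _ => (1 : ℝ)) := by
  intro u B
  have hA : (S⁻¹).PosDef := hS.inv
  set A := S⁻¹ with hAdef
  set e : Fin k → ℝ := fun _ => (1 : ℝ) with he
  have he0 : e ≠ 0 := by
    intro h
    have := congrFun h ⟨0, hk⟩
    simp [he] at this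
  set c : ℝ := e ⬝ᵥ A *ᵥ e with hc
  have hc0 : 0 < c := by
    have := hA.dotProduct_mulVec_pos he0
    simpa [star_trivial] using this
  have hcne : c ≠ 0 := ne_of_gt hc0
  have hu : u = A *ᵥ e := rfl
  have hue : u ⬝ᵥ e = c := by rw [hu, hc, dotProduct_comm]
  have hux : ∀ x, u ⬝ᵥ x = e ⬝ᵥ (A *ᵥ x) := by
    intro x; rw [hu, herm_dot A hA.1 e x]
  have hBmul : ∀ x, B *ᵥ x = A *ᵥ x - (c⁻¹ * (u ⬝ᵥ x)) • u := by
    intro x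
    show (A - c⁻¹ • vecMulVec u u) *ᵥ x = _
    rw [sub_mulVec, smul_mulVec, vecMulVec_mulVec', smul_smul]
  have hquad : ∀ x, x ⬝ᵥ (B *ᵥ x) =
      (x - (c⁻¹ * (u ⬝ᵥ x)) • e) ⬝ᵥ (A *ᵥ (x - (c⁻¹ * (u ⬝ᵥ x)) • e)) := by
    intro x
    rw [hBmul]
    simp only [mulVec_sub, mulVec_smul, ← hu, sub_dotProduct, dotProduct_sub,
      smul_dotProduct, dotProduct_smul, smul_eq_mul]
    have h1 : e ⬝ᵥ (A *ᵥ x) = u ⬝ᵥ x := (hux x).symm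
    have h2 : e ⬝ᵥ u = c := by rw [dotProduct_comm]; exact hue
    have h3 : x ⬝ᵥ u = u ⬝ᵥ x := dotProduct_comm _ _
    rw [h1, h2, h3]
    field_simp
    ring
  have hBH : B.IsHermitian := by
    show Bᴴ = B
    ext i j
    have hAij : A j i = A i j := by
      have := congrFun (congrFun hA.1.eq i) j
      simpa [conjTranspose_apply] using this
    simp [B, conjTranspose_apply, Matrix.sub_apply, vecMulVec_apply, mul_comm, hAij]
    exact hAij
  refine ⟨.of_dotProduct_mulVec_nonneg hBH fun x => ?_, fun x => ?_⟩
  · have := hA.posSemidef.dotProduct_mulVec_nonneg (x - (c⁻¹ * (u ⬝ᵥ x)) • e)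
    simpa [star_trivial, hquad x] using this
  constructor
  · intro hBx
    have hq0 : x ⬝ᵥ (B *ᵥ x) = 0 := by rw [hBx]; simp
    rw [hquad x] at hq0
    have hxe : x - (c⁻¹ * (u ⬝ᵥ x)) • e = 0 := by
      by_contra hne
      have := hA.dotProduct_mulVec_pos hne
      rw [star_trivial] at this
      exact absurd hq0 (ne_of_gt this)
    exact ⟨c⁻¹ * (u ⬝ᵥ x), by rw [← sub_eq_zero]; exact hxe⟩
  · rintro ⟨d, rfl⟩
    rw [hBmul]
    have : u ⬝ᵥ d • e = d * c := by rw [dotProduct_smul, smul_eq_mul, hue]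
    rw [this, mulVec_smul, ← hu]
    rw [show c⁻¹ * (d * c) = d by field_simp]
    simp
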